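/- If X₁ and X₂ are chronological Lorentzian pre-length spaces (i.e., x ≪ x never holds), then their Lorentzian amalgamation X = X₁ ⊔_A X₂ is chronological, i.e., the relation ≪̃ is irreflexive. -/

import Mathlib

open Set Metric

variable {α : Type*}

/-- The generating relation identifying `a ∈ A₁` with `f a`. -/
def glueRel {X₁ X₂ : Type*} (A₁ : Set X₁) (f : X₁ → X₂) : X₁ ⊕ X₂ → X₁ ⊕ X₂ → Prop :=
  fun p q => ∃ a ∈ A₁, p = Sum.inl a ∧ q = Sum.inr (f a)

/-- The equivalence relation generated by `a ∼ f a`. -/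
def glueEqv {X₁ X₂ : Type*} (A₁ : Set X₁) (f : X₁ → X₂) : X₁ ⊕ X₂ → X₁ ⊕ X₂ → Prop :=
  Relation.EqvGen (glueRel A₁ f)

def glueSetoid {X₁ X₂ : Type*} (A₁ : Set X₁) (f : X₁ → X₂) : Setoid (X₁ ⊕ X₂) :=
  ⟨glueEqv A₁ f, Relation.EqvGen.is_equivalence _⟩

/-- The disjoint union of two relations. -/
def sumRel {X₁ X₂ : Type*} (r₁ : X₁ → X₁ → Prop) (r₂ : X₂ → X₂ → Prop) :
    X₁ ⊕ X₂ → X₁ ⊕ X₂ → Prop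
  | Sum.inl x, Sum.inl y => r₁ x y
  | Sum.inr x, Sum.inr y => r₂ x y
  | _, _ => False

/-- One step `p ∼ p' R q' ∼ q` of a chain. -/
def glueStep (R eqv : α → α → Prop) : α → α → Prop := fun p q =>
  ∃ p' q', eqv p p' ∧ R p' q' ∧ eqv q' q

/-- The quotient relation: there is a finite chain `x ∼ x₁ R y₁ ∼ x₂ R y₂ ∼ ⋯ ∼ xₙ R yₙ ∼ y`. -/
def quotRel (R eqv : α → α → Prop) : α → α → Prop :=
  Relation.TransGen (glueStep R eqv)

/-- A gluing chain from `x` to `y`: a nonempty list of pairs `(xᵢ, yᵢ)` with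
`x ∼ x₁`, `yᵢ ∼ xᵢ₊₁`, and `yₙ ∼ y`. -/
def IsGlueChain (eqv : α → α → Prop) (x y : α) (l : List (α × α)) : Prop :=
  l ≠ [] ∧ l.Chain' (fun p q => eqv p.2 q.1) ∧
    (∃ p, l.head? = some p ∧ eqv x p.1) ∧ (∃ p, l.getLast? = some p ∧ eqv p.2 y)

/-- A causal chain: a gluing chain in which each pair is causally related. -/
def IsCausalChain (le eqv : α → α → Prop) (x y : α) (l : List (α × α)) : Prop :=
  IsGlueChain eqv x y l ∧ ∀ p ∈ l, le p.1 p.2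

/-- The quotient time separation: supremum of `Σ τ(xᵢ,yᵢ)` over causal chains. -/
noncomputable def quotTau (τ : α → α → ENNReal) (le eqv : α → α → Prop) (x y : α) : ENNReal :=
  sSup {v | ∃ l, IsCausalChain le eqv x y l ∧ v = (l.map fun p => τ p.1 p.2).sum}

/-- The quotient semi-metric: infimum of `Σ d(xᵢ,yᵢ)` over gluing chains. -/
noncomputable def quotDist (D : α → α → ENNReal) (eqv : α → α → Prop) (x y : α) : ENNReal :=
  sInf {v | ∃ l, IsGlueChain eqv x y l ∧ v = (l.map fun p => D p.1 p.2).sum}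

/-- The disjoint union time separation (zero across the two factors). -/
noncomputable def sumTau {X₁ X₂ : Type*} (τ₁ : X₁ → X₁ → ENNReal) (τ₂ : X₂ → X₂ → ENNReal) :
    X₁ ⊕ X₂ → X₁ ⊕ X₂ → ENNReal
  | Sum.inl x, Sum.inl y => τ₁ x y
  | Sum.inr x, Sum.inr y => τ₂ x y
  | _, _ => 0

/-- The disjoint union (extended) distance (infinite across the two factors). -/
noncomputable def sumEDist {X₁ X₂ : Type*} [PseudoEMetricSpace X₁] [PseudoEMetricSpace X₂] :
    X₁ ⊕ X₂ → X₁ ⊕ X₂ → ENNReal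
  | Sum.inl x, Sum.inl y => edist x y
  | Sum.inr x, Sum.inr y => edist x y
  | _, _ => ⊤

/-- A future-directed causal curve w.r.t. an extended distance `D` (locally Lipschitz)
and a causal relation `R` (monotone). -/
def IsCausalCurveE (D : α → α → ENNReal) (R : α → α → Prop) (γ : ℝ → α) (a b : ℝ) : Prop :=
  a ≤ b ∧
  (∀ t ∈ Set.Icc a b, ∃ K : NNReal, ∃ ε > (0:ℝ), ∀ s ∈ Set.Icc a b, ∀ s' ∈ Set.Icc a b,
      |s - t| < ε → |s' - t| < ε → D (γ s) (γ s') ≤ (K : ENNReal) * ENNReal.ofReal |s - s'|) ∧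
  ∀ s ∈ Set.Icc a b, ∀ t ∈ Set.Icc a b, s < t → R (γ s) (γ t)

/-- The `τ`-length of a curve: infimum over partitions of `Σ τ(γ(tᵢ),γ(tᵢ₊₁))`. -/
noncomputable def tauLen (T : α → α → ENNReal) (γ : ℝ → α) (a b : ℝ) : ENNReal :=
  sInf {v | ∃ n : ℕ, ∃ t : Fin (n + 1) → ℝ, StrictMono t ∧ t 0 = a ∧ t (Fin.last n) = b ∧
    v = ∑ i : Fin n, T (γ (t i.castSucc)) (γ (t i.succ))}

/-- The `d`-length of a curve: supremum over partitions of `Σ d(γ(tᵢ),γ(tᵢ₊₁))`. -/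
noncomputable def dLen (D : α → α → ENNReal) (γ : ℝ → α) (a b : ℝ) : ENNReal :=
  sSup {v | ∃ n : ℕ, ∃ t : Fin (n + 1) → ℝ, StrictMono t ∧ t 0 = a ∧ t (Fin.last n) = b ∧
    v = ∑ i : Fin n, D (γ (t i.castSucc)) (γ (t i.succ))}

/-- The quotient relation, descended to the quotient space. -/
def qRel {X₁ X₂ : Type*} (A₁ : Set X₁) (f : X₁ → X₂) (R : X₁ ⊕ X₂ → X₁ ⊕ X₂ → Prop)
    (p q : Quotient (glueSetoid A₁ f)) : Prop :=
  ∃ x y, Quotient.mk (glueSetoid A₁ f) x = p ∧ Quotient.mk (glueSetoid A₁ f) y = q ∧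
    quotRel R (glueEqv A₁ f) x y

/-- The quotient semi-metric, descended to the quotient space. -/
noncomputable def qDist {X₁ X₂ : Type*} [PseudoEMetricSpace X₁] [PseudoEMetricSpace X₂]
    (A₁ : Set X₁) (f : X₁ → X₂) (p q : Quotient (glueSetoid A₁ f)) : ENNReal :=
  quotDist sumEDist (glueEqv A₁ f) p.out q.out

/-- The quotient time separation, descended to the quotient space. -/
noncomputable def qTau {X₁ X₂ : Type*} (A₁ : Set X₁) (f : X₁ → X₂)
    (τ₁ : X₁ → X₁ → ENNReal) (τ₂ : X₂ → X₂ → ENNReal)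
    (le₁ : X₁ → X₁ → Prop) (le₂ : X₂ → X₂ → Prop)
    (p q : Quotient (glueSetoid A₁ f)) : ENNReal :=
  quotTau (sumTau τ₁ τ₂) (sumRel le₁ le₂) (glueEqv A₁ f) p.out q.out

section AmalgAux

variable {X₁ X₂ : Type*} (A₁ : Set X₁) (f : X₁ → X₂)
  (le₁ : X₁ → X₁ → Prop) (le₂ : X₂ → X₂ → Prop)

/-- Auxiliary causal relation on the disjoint union, allowing crossing through `A₁`. -/
def amLe : X₁ ⊕ X₂ → X₁ ⊕ X₂ → Prop
  | Sum.inl x, Sum.inl y => le₁ x y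
  | Sum.inr x, Sum.inr y => le₂ x y
  | Sum.inl x, Sum.inr y => ∃ a ∈ A₁, le₁ x a ∧ le₂ (f a) y
  | Sum.inr x, Sum.inl y => ∃ a ∈ A₁, le₂ x (f a) ∧ le₁ a y

theorem amLe_trans
    (le₁_trans : ∀ x y z, le₁ x y → le₁ y z → le₁ x z)
    (le₂_trans : ∀ x y z, le₂ x y → le₂ y z → le₂ x z)
    (hpres_le : ∀ a ∈ A₁, ∀ b ∈ A₁, (le₁ a b ↔ le₂ (f a) (f b))) :
    ∀ p q r, amLe A₁ f le₁ le₂ p q → amLe A₁ f le₁ le₂ q r → amLe A₁ f le₁ le₂ p r := by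
  rintro (x | x) (y | y) (z | z) h₁ h₂
  · exact le₁_trans _ _ _ h₁ h₂
  · obtain ⟨a, ha, h₂₁, h₂₂⟩ := h₂
    exact ⟨a, ha, le₁_trans _ _ _ h₁ h₂₁, h₂₂⟩
  · obtain ⟨a, ha, h₁₁, h₁₂⟩ := h₁
    obtain ⟨b, hb, h₂₁, h₂₂⟩ := h₂
    exact le₁_trans _ _ _ h₁₁ (le₁_trans _ _ _
      ((hpres_le a ha b hb).2 (le₂_trans _ _ _ h₁₂ h₂₁)) h₂₂)
  · obtain ⟨a, ha, h₁₁, h₁₂⟩ := h₁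
    exact ⟨a, ha, h₁₁, le₂_trans _ _ _ h₁₂ h₂⟩
  · obtain ⟨a, ha, h₁₁, h₁₂⟩ := h₁
    exact ⟨a, ha, h₁₁, le₁_trans _ _ _ h₁₂ h₂⟩
  · obtain ⟨a, ha, h₁₁, h₁₂⟩ := h₁
    obtain ⟨b, hb, h₂₁, h₂₂⟩ := h₂
    exact le₂_trans _ _ _ h₁₁ (le₂_trans _ _ _
      ((hpres_le a ha b hb).1 (le₁_trans _ _ _ h₁₂ h₂₁)) h₂₂)
  · obtain ⟨a, ha, h₂₁, h₂₂⟩ := h₂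
    exact ⟨a, ha, le₂_trans _ _ _ h₁ h₂₁, h₂₂⟩
  · exact le₂_trans _ _ _ h₁ h₂

theorem eqv_amLe
    (le₁_trans : ∀ x y z, le₁ x y → le₁ y z → le₁ x z)
    (le₂_trans : ∀ x y z, le₂ x y → le₂ y z → le₂ x z)
    (hpres_le : ∀ a ∈ A₁, ∀ b ∈ A₁, (le₁ a b ↔ le₂ (f a) (f b)))
    (le₁_refl : ∀ x, le₁ x x) (le₂_refl : ∀ x, le₂ x x)
    {p q : X₁ ⊕ X₂} (h : glueEqv A₁ f p q) :
    amLe A₁ f le₁ le₂ p q ∧ amLe A₁ f le₁ le₂ q p := by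
  induction h with
  | rel p q hpq =>
    obtain ⟨a, ha, rfl, rfl⟩ := hpq
    exact ⟨⟨a, ha, le₁_refl a, le₂_refl _⟩, ⟨a, ha, le₂_refl _, le₁_refl a⟩⟩
  | refl p =>
    cases p with
    | inl x => exact ⟨le₁_refl _, le₁_refl _⟩
    | inr x => exact ⟨le₂_refl _, le₂_refl _⟩
  | symm _ _ _ ih => exact ⟨ih.2, ih.1⟩
  | trans _ _ _ _ _ ih₁ ih₂ =>
    exact ⟨amLe_trans A₁ f le₁ le₂ le₁_trans le₂_trans hpres_le _ _ _ ih₁.1 ih₂.1,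
      amLe_trans A₁ f le₁ le₂ le₁_trans le₂_trans hpres_le _ _ _ ih₂.2 ih₁.2⟩

theorem sumRel_amLe {p q : X₁ ⊕ X₂} (h : sumRel le₁ le₂ p q) : amLe A₁ f le₁ le₂ p q := by
  cases p <;> cases q <;> simp [sumRel] at h <;> exact h

theorem chain_amLe
    (le₁_trans : ∀ x y z, le₁ x y → le₁ y z → le₁ x z)
    (le₂_trans : ∀ x y z, le₂ x y → le₂ y z → le₂ x z)
    (hpres_le : ∀ a ∈ A₁, ∀ b ∈ A₁, (le₁ a b ↔ le₂ (f a) (f b)))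
    (le₁_refl : ∀ x, le₁ x x) (le₂_refl : ∀ x, le₂ x x)
    (l : List ((X₁ ⊕ X₂) × (X₁ ⊕ X₂))) :
    ∀ x y, IsCausalChain (sumRel le₁ le₂) (glueEqv A₁ f) x y l →
      ∀ pr ∈ l, amLe A₁ f le₁ le₂ x pr.1 ∧ amLe A₁ f le₁ le₂ pr.2 y := by
  have htr := amLe_trans A₁ f le₁ le₂ le₁_trans le₂_trans hpres_le
  have heqv : ∀ {p q : X₁ ⊕ X₂}, glueEqv A₁ f p q → amLe A₁ f le₁ le₂ p q := fun h =>
    (eqv_amLe A₁ f le₁ le₂ le₁_trans le₂_trans hpres_le le₁_refl le₂_refl h).1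
  induction l with
  | nil => rintro x y ⟨⟨hne, _⟩, _⟩ pr hpr; exact absurd rfl hne
  | cons p rest ih =>
    rintro x y ⟨⟨hne, hch, ⟨hp, hhead, hxe⟩, ⟨lp, hlast, hle⟩⟩, hcaus⟩ pr hpr
    rw [List.head?_cons, Option.some_inj] at hhead
    subst hhead
    cases rest with
    | nil =>
      simp only [List.getLast?_singleton, Option.some_inj] at hlast
      subst hlast
      rcases List.mem_singleton.1 hpr with rfl
      exact ⟨heqv hxe, heqv hle⟩
    | cons q rest' =>
      rw [List.Chain', List.isChain_cons_cons] at hch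
      have hcc : IsCausalChain (sumRel le₁ le₂) (glueEqv A₁ f) p.2 y (q :: rest') := by
        refine ⟨⟨List.cons_ne_nil _ _, hch.2, ⟨q, rfl, hch.1⟩, ⟨lp, ?_, hle⟩⟩,
          fun pr' hpr' => hcaus pr' (List.mem_cons_of_mem _ hpr')⟩
        rwa [List.getLast?_cons_cons] at hlast
      have ihq := ih p.2 y hcc
      have hLep2q1 : amLe A₁ f le₁ le₂ p.2 y := by
        have := ihq q (List.mem_cons_self)
        exact htr _ _ _ (htr _ _ _ this.1
          (sumRel_amLe A₁ f le₁ le₂ (hcaus q (List.mem_cons_of_mem _ (List.mem_cons_self)))))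
          this.2
      rcases List.mem_cons.1 hpr with rfl | hpr'
      · exact ⟨heqv hxe, hLep2q1⟩
      · have := ihq pr hpr'
        refine ⟨htr _ _ _ (heqv hxe) (htr _ _ _
          (sumRel_amLe A₁ f le₁ le₂ (hcaus p (List.mem_cons_self))) this.1), this.2⟩

end AmalgAux

/-- If `X₁` and `X₂` are chronological Lorentzian pre-length spaces, then their
Lorentzian amalgamation is chronological: the quotient timelike relation
`[x] ≪̃ [y] ⟺ τ̃([x],[y]) > 0` is irreflexive. -/
theorem amalgamation_chronological
    {X₁ X₂ : Type*} [MetricSpace X₁] [MetricSpace X₂]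
    (A₁ : Set X₁) (A₂ : Set X₂) (hA₁ : IsClosed A₁) (hA₂ : IsClosed A₂)
    (f : X₁ → X₂) (g : X₂ → X₁) (hf : Set.BijOn f A₁ A₂)
    (hgf : ∀ a ∈ A₁, g (f a) = a) (hfc : ContinuousOn f A₁) (hgc : ContinuousOn g A₂)
    (hlip : ∀ a ∈ A₁, ∃ ε > (0:ℝ), ∃ K : NNReal, ∀ x ∈ A₁ ∩ Metric.ball a ε,
      ∀ y ∈ A₁ ∩ Metric.ball a ε,
        dist (f x) (f y) ≤ K * dist x y ∧ dist x y ≤ K * dist (f x) (f y))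
    (ll₁ le₁ : X₁ → X₁ → Prop) (ll₂ le₂ : X₂ → X₂ → Prop)
    (τ₁ : X₁ → X₁ → ENNReal) (τ₂ : X₂ → X₂ → ENNReal)
    (le₁_refl : ∀ x, le₁ x x) (le₁_trans : ∀ x y z, le₁ x y → le₁ y z → le₁ x z)
    (le₂_refl : ∀ x, le₂ x x) (le₂_trans : ∀ x y z, le₂ x y → le₂ y z → le₂ x z)
    (ll₁_trans : ∀ x y z, ll₁ x y → ll₁ y z → ll₁ x z)
    (ll₂_trans : ∀ x y z, ll₂ x y → ll₂ y z → ll₂ x z)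
    (ll₁_le : ∀ x y, ll₁ x y → le₁ x y) (ll₂_le : ∀ x y, ll₂ x y → le₂ x y)
    (τ₁_lsc : LowerSemicontinuous fun p : X₁ × X₁ => τ₁ p.1 p.2)
    (τ₂_lsc : LowerSemicontinuous fun p : X₂ × X₂ => τ₂ p.1 p.2)
    (rev_tri₁ : ∀ x y z, le₁ x y → le₁ y z → τ₁ x y + τ₁ y z ≤ τ₁ x z)
    (rev_tri₂ : ∀ x y z, le₂ x y → le₂ y z → τ₂ x y + τ₂ y z ≤ τ₂ x z)
    (ll₁_iff : ∀ x y, ll₁ x y ↔ 0 < τ₁ x y) (ll₂_iff : ∀ x y, ll₂ x y ↔ 0 < τ₂ x y)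
    (ntli₁_future : ∀ a ∈ A₁, (∃ q, ll₁ a q) → ∀ U ∈ nhds a, ∃ b ∈ U ∩ A₁, ll₁ a b)
    (ntli₁_past : ∀ a ∈ A₁, (∃ q, ll₁ q a) → ∀ U ∈ nhds a, ∃ b ∈ U ∩ A₁, ll₁ b a)
    (ntli₂_future : ∀ a ∈ A₂, (∃ q, ll₂ a q) → ∀ U ∈ nhds a, ∃ b ∈ U ∩ A₂, ll₂ a b)
    (ntli₂_past : ∀ a ∈ A₂, (∃ q, ll₂ q a) → ∀ U ∈ nhds a, ∃ b ∈ U ∩ A₂, ll₂ b a)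
    (hpres_le : ∀ a ∈ A₁, ∀ b ∈ A₁, (le₁ a b ↔ le₂ (f a) (f b)))
    (hpres_ll : ∀ a ∈ A₁, ∀ b ∈ A₁, (ll₁ a b ↔ ll₂ (f a) (f b)))
    (hpres_tau : ∀ a ∈ A₁, ∀ b ∈ A₁, τ₁ a b = τ₂ (f a) (f b))
    (hcompat : ∀ a ∈ A₁, ((∃ q, ll₁ a q) ↔ (∃ q, ll₂ (f a) q)) ∧
      ((∃ q, ll₁ q a) ↔ (∃ q, ll₂ q (f a))))
    (chron₁ : ∀ x, ¬ ll₁ x x) (chron₂ : ∀ x, ¬ ll₂ x x)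
    :
    ∀ p : X₁ ⊕ X₂, ¬ 0 < quotTau (sumTau τ₁ τ₂) (sumRel le₁ le₂) (glueEqv A₁ f) p p := by
  intro p hpos
  rw [quotTau, lt_sSup_iff] at hpos
  obtain ⟨v, ⟨l, hl, rfl⟩, hvpos⟩ := hpos
  have hex : ∃ pr ∈ l, sumTau τ₁ τ₂ pr.1 pr.2 ≠ 0 := by
    by_contra h
    push_neg at h
    have hz : (l.map fun pr => sumTau τ₁ τ₂ pr.1 pr.2).sum = 0 := by
      apply List.sum_eq_zero
      intro x hx
      obtain ⟨pr, hpr, rfl⟩ := List.mem_map.1 hx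
      exact h pr hpr
    rw [hz] at hvpos
    exact lt_irrefl 0 hvpos
  obtain ⟨pr, hpr, hτ⟩ := hex
  have hkey := chain_amLe A₁ f le₁ le₂ le₁_trans le₂_trans hpres_le le₁_refl le₂_refl
    l p p hl pr hpr
  have hcyc : amLe A₁ f le₁ le₂ pr.2 pr.1 :=
    amLe_trans A₁ f le₁ le₂ le₁_trans le₂_trans hpres_le _ _ _ hkey.2 hkey.1
  obtain ⟨x, y⟩ := pr
  cases x with
  | inl x =>
    cases y with
    | inl y =>
      have hτxy : 0 < τ₁ x y := pos_iff_ne_zero.2 hτ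
      have hle : le₁ y x := hcyc
      have hxx : 0 < τ₁ x x :=
        lt_of_lt_of_le hτxy (le_trans le_self_add
          (rev_tri₁ x y x (ll₁_le x y ((ll₁_iff x y).2 hτxy)) hle))
      exact chron₁ x ((ll₁_iff x x).2 hxx)
    | inr y => exact hτ rfl
  | inr x =>
    cases y with
    | inl y => exact hτ rfl
    | inr y =>
      have hτxy : 0 < τ₂ x y := pos_iff_ne_zero.2 hτ
      have hle : le₂ y x := hcyc
      have hxx : 0 < τ₂ x x :=
        lt_of_lt_of_le hτxy (le_trans le_self_add
          (rev_tri₂ x y x (ll₂_le x y ((ll₂_iff x y).2 hτxy)) hle))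
      exact chron₂ x ((ll₂_iff x x).2 hxx)
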